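/- Let A be a Schur ring over a finite abelian group G, H an A-subgroup of G, and let A_H denote the induced Schur ring on H and A_{G/H} the induced Schur ring on G/H. Then the dual S-ring of A_{G/H} equals the restriction of the dual S-ring of A to the annihilator subgroup H^⊥ of the dual group Ĝ. -/

import Mathlib

open Pointwise

/-- A Schur ring over a finite group `G`, given combinatorially by its partition
into basic sets with constant structure constants. -/
structure SchurRing (G : Type*) [Group G] where
  parts : Set (Set G)
  nonempty : ∀ X ∈ parts, X.Nonempty
  cover : ∀ g : G, ∃ X ∈ parts, g ∈ X
  disjoint : ∀ X ∈ parts, ∀ Y ∈ parts, X ≠ Y → X ∩ Y = ∅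
  one_mem : {1} ∈ parts
  inv_closed : ∀ X ∈ parts, X⁻¹ ∈ parts
  struct_const : ∀ X ∈ parts, ∀ Y ∈ parts, ∀ Z ∈ parts, ∀ z₁ ∈ Z, ∀ z₂ ∈ Z,
    Set.ncard {xy : G × G | xy.1 ∈ X ∧ xy.2 ∈ Y ∧ xy.1 * xy.2 = z₁} =
    Set.ncard {xy : G × G | xy.1 ∈ X ∧ xy.2 ∈ Y ∧ xy.1 * xy.2 = z₂}

/-- A subset of `G` is an `A`-set if it is a union of basic sets of `A`. -/
def SchurRing.IsASet {G : Type*} [Group G] (A : SchurRing G) (S : Set G) : Prop :=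
  ∀ g ∈ S, ∃ X ∈ A.parts, g ∈ X ∧ X ⊆ S


/-- The character sum `χ(S) = ∑_{s ∈ S} χ(s)`. -/
noncomputable def charSum {G : Type*} [Group G] (χ : G →* ℂ) (S : Set G) : ℂ :=
  ∑ᶠ s ∈ S, χ s

/-- The partition of the dual group (complex characters of `G`) dual to a family
of subsets of `G`: characters are equivalent iff they have equal sums over every
member of the family. -/
def dualParts {G : Type*} [Group G] (parts : Set (Set G)) : Set (Set (G →* ℂ)) :=
  Set.range (fun χ₀ : G →* ℂ => {χ : G →* ℂ | ∀ S ∈ parts, charSum χ S = charSum χ₀ S})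

open scoped Classical

section DualAux

private lemma charSum_eq_sum {G : Type*} [Group G] [Fintype G] (χ : G →* ℂ) (S : Set G) :
    charSum χ S = ∑ x ∈ (Set.toFinite S).toFinset, χ x := by
  conv_lhs => rw [charSum, ← (Set.toFinite S).coe_toFinset]
  exact finsum_mem_coe_finset _ _

private lemma sum_decomp {G : Type*} [Group G] [Fintype G] (A : SchurRing G) {S : Set G}
    (hS : A.IsASet S) {M : Type*} [AddCommMonoid M] (f : G → M) :
    ∑ x ∈ (Set.toFinite S).toFinset, f x
      = ∑ Y ∈ (Set.toFinite {Y | Y ∈ A.parts ∧ Y ⊆ S}).toFinset,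
          ∑ x ∈ (Set.toFinite Y).toFinset, f x := by
  have hdisj : (↑((Set.toFinite {Y | Y ∈ A.parts ∧ Y ⊆ S}).toFinset) :
      Set (Set G)).PairwiseDisjoint (fun Y => (Set.toFinite Y).toFinset) := by
    intro Y hY Z hZ hne
    simp only [Set.Finite.coe_toFinset, Set.mem_setOf_eq] at hY hZ
    refine Finset.disjoint_left.2 fun a haY haZ => ?_
    simp only [Set.Finite.mem_toFinset] at haY haZ
    have h := A.disjoint Y hY.1 Z hZ.1 hne
    exact absurd (Set.mem_inter haY haZ) (by rw [h]; exact Set.notMem_empty a)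
  rw [← Finset.sum_biUnion hdisj]
  congr 1
  ext x
  simp only [Finset.mem_biUnion, Set.Finite.mem_toFinset, Set.mem_setOf_eq]
  constructor
  · intro hx
    obtain ⟨X, hX, hxX, hXS⟩ := hS x hx
    exact ⟨X, ⟨hX, hXS⟩, hxX⟩
  · rintro ⟨Y, ⟨hY, hYS⟩, hxY⟩
    exact hYS hxY

private lemma charSum_ASet_congr {G : Type*} [Group G] [Fintype G] (A : SchurRing G)
    {S : Set G} (hS : A.IsASet S) (χ χ' : G →* ℂ)
    (h : ∀ X ∈ A.parts, charSum χ X = charSum χ' X) :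
    charSum χ S = charSum χ' S := by
  rw [charSum_eq_sum, charSum_eq_sum, sum_decomp A hS, sum_decomp A hS]
  refine Finset.sum_congr rfl fun Y hY => ?_
  simp only [Set.Finite.mem_toFinset, Set.mem_setOf_eq] at hY
  rw [← charSum_eq_sum, ← charSum_eq_sum]
  exact h Y hY.1

private lemma pair_ncard_eq {G : Type*} [CommGroup G] [Fintype G] (X Y : Set G) (z : G) :
    Set.ncard {xy : G × G | xy.1 ∈ X ∧ xy.2 ∈ Y ∧ xy.1 * xy.2 = z}
      = (((Set.toFinite Y).toFinset.filter fun h => z * h⁻¹ ∈ X)).card := by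
  have hinj : Function.Injective (fun h : G => (z * h⁻¹, h)) :=
    fun a b hab => congrArg Prod.snd hab
  have hset : {xy : G × G | xy.1 ∈ X ∧ xy.2 ∈ Y ∧ xy.1 * xy.2 = z}
      = (fun h : G => (z * h⁻¹, h)) ''
          ↑((Set.toFinite Y).toFinset.filter fun h => z * h⁻¹ ∈ X) := by
    ext ⟨a, b⟩
    simp only [Set.mem_setOf_eq, Set.mem_image, Finset.coe_filter,
      Set.Finite.mem_toFinset]
    constructor
    · rintro ⟨ha, hb, habz⟩
      have hab : z * b⁻¹ = a := mul_inv_eq_iff_eq_mul.2 habz.symm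
      exact ⟨b, ⟨hb, hab ▸ ha⟩, by rw [hab]⟩
    · rintro ⟨h, ⟨hh, hX⟩, heq⟩
      obtain ⟨h1, h2⟩ := Prod.mk.injEq .. ▸ heq
      subst h2
      rw [← h1]
      exact ⟨hX, hh, by group⟩
  rw [hset, Set.ncard_image_of_injective _ hinj, Set.ncard_coe_finset]

private lemma count_const {G : Type*} [CommGroup G] [Fintype G] (A : SchurRing G)
    (H : Subgroup G) (hH : A.IsASet (H : Set G)) {X : Set G} (hX : X ∈ A.parts)
    {z₁ z₂ : G} (h₁ : z₁ ∈ X) (h₂ : z₂ ∈ X) :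
    ((Set.toFinite (H : Set G)).toFinset.filter fun h => z₁ * h⁻¹ ∈ X).card
      = ((Set.toFinite (H : Set G)).toFinset.filter fun h => z₂ * h⁻¹ ∈ X).card := by
  have key : ∀ z : G, ((Set.toFinite (H : Set G)).toFinset.filter fun h => z * h⁻¹ ∈ X).card
      = ∑ Y ∈ (Set.toFinite {Y | Y ∈ A.parts ∧ Y ⊆ (H : Set G)}).toFinset,
          Set.ncard {xy : G × G | xy.1 ∈ X ∧ xy.2 ∈ Y ∧ xy.1 * xy.2 = z} := by
    intro z
    rw [Finset.card_filter, sum_decomp A hH]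
    exact Finset.sum_congr rfl fun Y _ => by rw [pair_ncard_eq, Finset.card_filter]
  rw [key, key]
  refine Finset.sum_congr rfl fun Y hY => ?_
  simp only [Set.Finite.mem_toFinset, Set.mem_setOf_eq] at hY
  exact A.struct_const X hX Y hY.1 X hX z₁ h₁ z₂ h₂

private lemma inv1 {G : Type*} [CommGroup G] (x z : G) : z * (x⁻¹ * z)⁻¹ = x := by
  rw [mul_inv_rev, inv_inv, mul_inv_cancel_left]

private lemma inv2 {G : Type*} [CommGroup G] (h z : G) : (z * h⁻¹)⁻¹ * z = h := by
  rw [mul_inv_rev, inv_inv, inv_mul_cancel_right]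

private lemma fiber_card {G : Type*} [CommGroup G] [Fintype G] (H : Subgroup G)
    (X : Set G) (z : G) :
    ((Set.toFinite X).toFinset.filter
        fun x => (QuotientGroup.mk' H) x = (QuotientGroup.mk' H) z).card
      = ((Set.toFinite (H : Set G)).toFinset.filter fun h => z * h⁻¹ ∈ X).card := by
  refine Finset.card_nbij' (fun x => x⁻¹ * z) (fun h => z * h⁻¹) ?_ ?_ ?_ ?_
  · intro x hx
    simp only [Finset.mem_filter, Set.Finite.mem_toFinset, QuotientGroup.mk'_apply,
      QuotientGroup.eq, SetLike.mem_coe] at hx ⊢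
    exact ⟨hx.2, by rw [inv1]; exact hx.1⟩
  · intro h hh
    simp only [Finset.mem_filter, Set.Finite.mem_toFinset, QuotientGroup.mk'_apply,
      QuotientGroup.eq, SetLike.mem_coe] at hh ⊢
    exact ⟨hh.2, by rw [inv2]; exact hh.1⟩
  · intro x _; exact inv1 x z
  · intro h _; exact inv2 h z

private lemma charSum_comp_eq {G : Type*} [CommGroup G] [Fintype G] (H : Subgroup G)
    (ψ : (G ⧸ H) →* ℂ) (X : Set G) {z₀ : G}
    (hconst : ∀ z ∈ X,
      ((Set.toFinite (H : Set G)).toFinset.filter fun h => z * h⁻¹ ∈ X).card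
        = ((Set.toFinite (H : Set G)).toFinset.filter fun h => z₀ * h⁻¹ ∈ X).card) :
    charSum (ψ.comp (QuotientGroup.mk' H)) X
      = (((Set.toFinite (H : Set G)).toFinset.filter fun h => z₀ * h⁻¹ ∈ X).card : ℂ)
          * charSum ψ ((QuotientGroup.mk' H) '' X) := by
  have himg : (Set.toFinite ((QuotientGroup.mk' H : G → G ⧸ H) '' X)).toFinset
      = (Set.toFinite X).toFinset.image (QuotientGroup.mk' H) := by
    ext y
    simp [Set.Finite.mem_toFinset]
  rw [charSum_eq_sum, charSum_eq_sum, himg]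
  have hl : ∑ x ∈ (Set.toFinite X).toFinset, (ψ.comp (QuotientGroup.mk' H)) x
      = ∑ x ∈ (Set.toFinite X).toFinset, ψ ((QuotientGroup.mk' H) x) := rfl
  rw [hl, Finset.sum_comp, Finset.mul_sum]
  refine Finset.sum_congr rfl fun y hy => ?_
  obtain ⟨z, hz, rfl⟩ := Finset.mem_image.1 hy
  rw [fiber_card H X z, hconst z (by simpa using hz), nsmul_eq_mul]

private lemma charSum_subgroup_card {G : Type*} [CommGroup G] [Fintype G] (H : Subgroup G)
    (χ : G →* ℂ) (hχ : ∀ h ∈ H, χ h = 1) :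
    charSum χ (H : Set G) = ((Set.toFinite (H : Set G)).toFinset.card : ℂ) := by
  rw [charSum_eq_sum,
    Finset.sum_congr rfl fun h hh => hχ h (by simpa using hh)]
  simp

private lemma charSum_subgroup_zero {G : Type*} [CommGroup G] [Fintype G] (H : Subgroup G)
    (χ : G →* ℂ) {h₀ : G} (hh₀ : h₀ ∈ H) (hne : χ h₀ ≠ 1) :
    charSum χ (H : Set G) = 0 := by
  have key : χ h₀ * charSum χ (H : Set G) = charSum χ (H : Set G) := by
    rw [charSum_eq_sum, Finset.mul_sum]
    refine Finset.sum_nbij' (fun x => h₀ * x) (fun x => h₀⁻¹ * x) ?_ ?_ ?_ ?_ ?_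
    · intro a ha
      simp only [Set.Finite.mem_toFinset, SetLike.mem_coe] at ha ⊢
      exact H.mul_mem hh₀ ha
    · intro a ha
      simp only [Set.Finite.mem_toFinset, SetLike.mem_coe] at ha ⊢
      exact H.mul_mem (H.inv_mem hh₀) ha
    · intro a _; exact inv_mul_cancel_left h₀ a
    · intro a _; exact mul_inv_cancel_left h₀ a
    · intro a _; exact (map_mul χ h₀ a).symm
  have h0 : (χ h₀ - 1) * charSum χ (H : Set G) = 0 := by
    rw [sub_mul, one_mul, key, sub_self]
  rcases mul_eq_zero.1 h0 with h | h
  · exact absurd (sub_eq_zero.1 h) hne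
  · exact h

private lemma image_class_eq {G : Type*} [CommGroup G] [Fintype G] (A : SchurRing G)
    (H : Subgroup G) (hH : A.IsASet (H : Set G)) (ψ₀ : (G ⧸ H) →* ℂ) :
    (fun χ : (G ⧸ H) →* ℂ => χ.comp (QuotientGroup.mk' H)) ''
        {ψ : (G ⧸ H) →* ℂ |
          ∀ S ∈ {Y : Set (G ⧸ H) | ∃ X ∈ A.parts, Y = (QuotientGroup.mk' H) '' X},
            charSum ψ S = charSum ψ₀ S}
      = {χ : G →* ℂ |
          ∀ S ∈ A.parts, charSum χ S = charSum (ψ₀.comp (QuotientGroup.mk' H)) S} := by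
  ext χ
  simp only [Set.mem_image, Set.mem_setOf_eq]
  constructor
  · rintro ⟨ψ, hψ, rfl⟩ S hS
    obtain ⟨z₀, hz₀⟩ := A.nonempty S hS
    have hc : ∀ z ∈ S,
        ((Set.toFinite (H : Set G)).toFinset.filter fun h => z * h⁻¹ ∈ S).card
          = ((Set.toFinite (H : Set G)).toFinset.filter fun h => z₀ * h⁻¹ ∈ S).card :=
      fun z hz => count_const A H hH hS hz hz₀
    rw [charSum_comp_eq H ψ S hc, charSum_comp_eq H ψ₀ S hc, hψ _ ⟨S, hS, rfl⟩]
  · intro hχ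
    have hker : ∀ h ∈ H, χ h = 1 := by
      by_contra hcon
      push_neg at hcon
      obtain ⟨h₀, hh₀, hne⟩ := hcon
      have h1 : charSum χ (H : Set G) = 0 := charSum_subgroup_zero H χ hh₀ hne
      have h2 : charSum (ψ₀.comp (QuotientGroup.mk' H)) (H : Set G)
          = ((Set.toFinite (H : Set G)).toFinset.card : ℂ) :=
        charSum_subgroup_card H _ (fun h hh => by
          simp [MonoidHom.comp_apply, QuotientGroup.mk'_apply,
            (QuotientGroup.eq_one_iff h).2 hh])
      have h3 : charSum χ (H : Set G)
          = charSum (ψ₀.comp (QuotientGroup.mk' H)) (H : Set G) :=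
        charSum_ASet_congr A hH _ _ hχ
      rw [h1, h2] at h3
      have hc0 : ((Set.toFinite (H : Set G)).toFinset.card : ℂ) ≠ 0 := by
        rw [Nat.cast_ne_zero]
        exact Finset.card_ne_zero_of_mem ((Set.Finite.mem_toFinset _).2 H.one_mem)
      exact hc0 h3.symm
    have hker' : H ≤ χ.ker := fun x hx => MonoidHom.mem_ker.mpr (hker x hx)
    refine ⟨QuotientGroup.lift H χ hker', ?_, ?_⟩
    · rintro Y ⟨X, hX, rfl⟩
      obtain ⟨z₀, hz₀⟩ := A.nonempty X hX
      have hc : ∀ z ∈ X,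
          ((Set.toFinite (H : Set G)).toFinset.filter fun h => z * h⁻¹ ∈ X).card
            = ((Set.toFinite (H : Set G)).toFinset.filter fun h => z₀ * h⁻¹ ∈ X).card :=
        fun z hz => count_const A H hH hX hz hz₀
      have hcomp : (QuotientGroup.lift H χ hker').comp (QuotientGroup.mk' H) = χ :=
        MonoidHom.ext fun g => QuotientGroup.lift_mk' H hker' g
      have h1 := charSum_comp_eq H (QuotientGroup.lift H χ hker') X hc
      have h2 := charSum_comp_eq H ψ₀ X hc
      rw [hcomp] at h1
      have hm : (((Set.toFinite (H : Set G)).toFinset.filter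
          fun h => z₀ * h⁻¹ ∈ X).card : ℂ) ≠ 0 := by
        rw [Nat.cast_ne_zero]
        refine Finset.card_ne_zero_of_mem (Finset.mem_filter.2
          ⟨(Set.Finite.mem_toFinset _).2 H.one_mem, by simpa using hz₀⟩)
      have heq := hχ X hX
      rw [h1, h2] at heq
      exact mul_left_cancel₀ hm heq
    · exact MonoidHom.ext fun g => QuotientGroup.lift_mk' H hker' g

end DualAux

/-- Duality and quotients: the dual of `A_{G/H}`, transported to characters of `G`
via composition with the projection `G → G/H`, is exactly the restriction of the
dual of `A` to the annihilator `H^⊥`. -/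
theorem dual_of_quotient_eq_restriction_to_perp {G : Type*} [CommGroup G] [Fintype G]
    (A : SchurRing G) (H : Subgroup G) (hH : A.IsASet (H : Set G)) :
    (fun C : Set ((G ⧸ H) →* ℂ) =>
        (fun χ : (G ⧸ H) →* ℂ => χ.comp (QuotientGroup.mk' H)) '' C) ''
      dualParts {Y : Set (G ⧸ H) | ∃ X ∈ A.parts, Y = (QuotientGroup.mk' H) '' X} =
    {C : Set (G →* ℂ) | C ∈ dualParts A.parts ∧
      C ⊆ {χ : G →* ℂ | ∀ h ∈ H, χ h = 1}} := by
  ext C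
  constructor
  · rintro ⟨D, hD, rfl⟩
    obtain ⟨ψ₀, rfl⟩ := hD
    beta_reduce
    refine ⟨?_, ?_⟩
    · rw [image_class_eq A H hH ψ₀]
      exact Set.mem_range.2 ⟨ψ₀.comp (QuotientGroup.mk' H), rfl⟩
    · rintro χ ⟨ψ, hψ, rfl⟩ h hh
      show (ψ.comp (QuotientGroup.mk' H)) h = 1
      simp [MonoidHom.comp_apply, QuotientGroup.mk'_apply,
        (QuotientGroup.eq_one_iff h).2 hh]
  · rintro ⟨hC, hsub⟩
    obtain ⟨χ₀, rfl⟩ := hC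
    have hk : ∀ h ∈ H, χ₀ h = 1 := hsub (fun S hS => rfl)
    have hker' : H ≤ χ₀.ker := fun x hx => MonoidHom.mem_ker.mpr (hk x hx)
    refine ⟨{ψ : (G ⧸ H) →* ℂ |
        ∀ S ∈ {Y : Set (G ⧸ H) | ∃ X ∈ A.parts, Y = (QuotientGroup.mk' H) '' X},
          charSum ψ S = charSum (QuotientGroup.lift H χ₀ hker') S},
      Set.mem_range.2 ⟨QuotientGroup.lift H χ₀ hker', rfl⟩, ?_⟩
    have hcomp : (QuotientGroup.lift H χ₀ hker').comp (QuotientGroup.mk' H) = χ₀ :=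
      MonoidHom.ext fun g => QuotientGroup.lift_mk' H hker' g
    rw [show ((fun C : Set ((G ⧸ H) →* ℂ) =>
        (fun χ : (G ⧸ H) →* ℂ => χ.comp (QuotientGroup.mk' H)) '' C) _)
      = (fun χ : (G ⧸ H) →* ℂ => χ.comp (QuotientGroup.mk' H)) ''
          {ψ : (G ⧸ H) →* ℂ |
            ∀ S ∈ {Y : Set (G ⧸ H) | ∃ X ∈ A.parts, Y = (QuotientGroup.mk' H) '' X},
              charSum ψ S = charSum (QuotientGroup.lift H χ₀ hker') S} from rfl,
      image_class_eq A H hH (QuotientGroup.lift H χ₀ hker'), hcomp]
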